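/- For x ∈ (0,1) with base-N expansion x = Σ_{i=1}^∞ n_i/N^i (n_i ∈ {0,...,N-1}), the Cantor CDF satisfies F_B(x) = Σ_{i=1}^∞ (∏_{k=1}^{i-1} b_{n_k}) · g(n_i)/‖B‖^i, where g is the cumulative digit function of B. -/

import Mathlib

open MeasureTheory Set
open scoped ENNReal

set_option maxHeartbeats 1000000 in
theorem cantor_cdf_series_formula
    (N : ℕ) (hN : 3 ≤ N) (D : Finset ℕ) (hD : D ⊆ Finset.range N)
    (hcard : 2 ≤ D.card) (hcard' : D.card ≤ N - 1)
    (μ : Measure ℝ) [IsProbabilityMeasure μ]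
    (hsupp : μ (Set.Icc 0 1) = 1)
    (hinv : μ = (D.card : ℝ≥0∞)⁻¹ • ∑ d ∈ D, μ.map (fun x : ℝ => (x + (d : ℝ)) / N))
    (x : ℝ) (hx : x ∈ Set.Ioo (0:ℝ) 1)
    (a : ℕ → ℕ) (ha : ∀ i, a i < N)
    (hxa : x = ∑' i : ℕ, (a i : ℝ) / (N : ℝ) ^ (i + 1)) :
    (μ (Set.Icc 0 x)).toReal
      = ∑' i : ℕ,
          (∏ k ∈ Finset.range i, (if a k ∈ D then (1:ℝ) else 0)) *
            (((D.filter (fun d => d < a i)).card : ℝ) / (D.card : ℝ) ^ (i + 1)) := by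
  have hN0 : (0:ℝ) < N := by positivity
  have hN1 : (1:ℝ) < N := by exact_mod_cast lt_of_lt_of_le (by norm_num) hN
  have hcR : (2:ℝ) ≤ D.card := by exact_mod_cast hcard
  have hcR0 : (0:ℝ) < D.card := by linarith
  -- support lemmas
  have hcompl : μ ((Icc (0:ℝ) 1)ᶜ) = 0 := by
    rw [measure_compl measurableSet_Icc (measure_ne_top μ _), hsupp, measure_univ, tsub_self]
  have hIio : μ (Iio (0:ℝ)) = 0 := by
    refine le_antisymm (le_trans (measure_mono ?_) hcompl.le) zero_le
    intro y hy
    simp only [mem_Iio] at hy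
    simp only [mem_compl_iff, mem_Icc, not_and_or, not_le]
    exact Or.inl hy
  -- no atom at zero
  have h0 : μ {(0:ℝ)} = 0 := by
    have key : μ {(0:ℝ)} ≤ (D.card : ℝ≥0∞)⁻¹ * μ {(0:ℝ)} := by
      conv_lhs => rw [hinv]
      rw [Measure.smul_apply, smul_eq_mul]
      gcongr _ * ?_
      have hmap : ∀ d ∈ D, (μ.map (fun x : ℝ => (x + (d : ℝ)) / N)) {(0:ℝ)}
          = μ {(-(d:ℝ))} := by
        intro d hd
        rw [Measure.map_apply (by fun_prop) (measurableSet_singleton 0)]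
        congr 1
        ext y
        simp only [mem_preimage, mem_singleton_iff]
        rw [div_eq_iff hN0.ne']
        constructor <;> intro h <;> linarith
      rw [show (∑ d ∈ D, μ.map (fun x : ℝ => (x + (d : ℝ)) / N)) {(0:ℝ)}
          = ∑ d ∈ D, (μ.map (fun x : ℝ => (x + (d : ℝ)) / N)) {(0:ℝ)} from by
        simp [Measure.coe_finset_sum, Finset.sum_apply]]
      rw [Finset.sum_congr rfl hmap]
      calc ∑ d ∈ D, μ {(-(d:ℝ))}
          ≤ ∑ d ∈ D, (if d = 0 then μ {(0:ℝ)} else 0) := by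
            refine Finset.sum_le_sum fun d hd => ?_
            by_cases h : d = 0
            · simp [h]
            · simp only [h, if_false]
              refine le_trans (measure_mono ?_) hIio.le
              intro y hy
              simp only [mem_singleton_iff] at hy
              subst hy
              simp only [mem_Iio, neg_neg, Left.neg_neg_iff]
              exact_mod_cast Nat.pos_of_ne_zero h
        _ ≤ μ {(0:ℝ)} := by
            rw [Finset.sum_ite_eq' D 0 (fun _ => μ {(0:ℝ)})]
            split <;> simp
    have hfin : μ {(0:ℝ)} ≠ ⊤ := measure_ne_top μ _
    have h2 : ((D.card : ℝ≥0∞))⁻¹ ≤ 2⁻¹ := by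
      apply ENNReal.inv_le_inv.mpr
      exact_mod_cast hcard
    have key2 : μ {(0:ℝ)} ≤ 2⁻¹ * μ {(0:ℝ)} := le_trans key (by gcongr)
    have hmono := ENNReal.toReal_mono (by finiteness) key2
    rw [ENNReal.toReal_mul] at hmono
    have h0' : (μ {(0:ℝ)}).toReal = 0 := by
      have hnn := ENNReal.toReal_nonneg (a := μ {(0:ℝ)})
      rw [show ((2:ℝ≥0∞)⁻¹).toReal = 1/2 by simp] at hmono
      linarith
    exact (ENNReal.toReal_eq_zero_iff _).mp h0' |>.resolve_right hfin
  -- the self-similarity step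
  have hstep : ∀ d0 : ℕ, d0 < N → ∀ t : ℝ, t ∈ Icc (0:ℝ) 1 →
      (μ (Icc 0 (((d0:ℝ) + t)/N))).toReal
        = (((D.filter (fun d => d < d0)).card : ℝ)
            + (if d0 ∈ D then (1:ℝ) else 0) * (μ (Icc 0 t)).toReal) / (D.card : ℝ) := by
    intro d0 hd0 t ht
    obtain ⟨ht0, ht1⟩ := ht
    have main : μ (Icc 0 (((d0:ℝ) + t)/N))
        = (D.card : ℝ≥0∞)⁻¹ * (((D.filter (fun d => d < d0)).card : ℝ≥0∞)
            + (if d0 ∈ D then μ (Icc 0 t) else 0)) := by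
      conv_lhs => rw [hinv]
      rw [Measure.smul_apply, smul_eq_mul]
      congr 1
      rw [show (∑ d ∈ D, μ.map (fun x : ℝ => (x + (d : ℝ)) / N)) (Icc 0 (((d0:ℝ) + t)/N))
          = ∑ d ∈ D, (μ.map (fun x : ℝ => (x + (d : ℝ)) / N)) (Icc 0 (((d0:ℝ) + t)/N)) from by
        simp [Measure.coe_finset_sum, Finset.sum_apply]]
      have hval : ∀ d ∈ D, (μ.map (fun x : ℝ => (x + (d : ℝ)) / N)) (Icc 0 (((d0:ℝ) + t)/N))
          = (if d < d0 then 1 else 0) + (if d = d0 then μ (Icc 0 t) else 0) := by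
        intro d hd
        rw [Measure.map_apply (by fun_prop) measurableSet_Icc]
        have hpre : (fun x : ℝ => (x + (d : ℝ)) / N) ⁻¹' (Icc 0 (((d0:ℝ) + t)/N))
            = Icc (-(d:ℝ)) (t + d0 - d) := by
          ext y
          simp only [mem_preimage, mem_Icc]
          constructor
          · rintro ⟨h1, h2⟩
            have h1' : (0:ℝ) ≤ y + d := by
              by_contra hc
              push_neg at hc
              have : (y + (d:ℝ)) / N < 0 := div_neg_of_neg_of_pos hc hN0
              linarith
            have h2' := mul_le_mul_of_nonneg_right h2 hN0.le
            rw [div_mul_cancel₀ _ hN0.ne', div_mul_cancel₀ _ hN0.ne'] at h2'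
            constructor <;> linarith
          · rintro ⟨h1, h2⟩
            refine ⟨div_nonneg (by linarith) hN0.le, ?_⟩
            exact div_le_div_of_nonneg_right (by linarith) hN0.le |>.trans_eq rfl
        rw [hpre]
        rcases lt_trichotomy d d0 with hlt | heq | hgt
        · have hd1 : (d:ℝ) + 1 ≤ d0 := by exact_mod_cast hlt
          rw [if_pos hlt, if_neg hlt.ne]
          have h1 : μ (Icc (-(d:ℝ)) (t + d0 - d)) ≤ 1 := prob_le_one
          have h2 : (1:ℝ≥0∞) ≤ μ (Icc (-(d:ℝ)) (t + d0 - d)) := by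
            rw [← hsupp]
            refine measure_mono fun y hy => ?_
            obtain ⟨hy0, hy1⟩ := hy
            constructor <;> [linarith [Nat.cast_nonneg (α := ℝ) d]; linarith]
          simpa using le_antisymm h1 h2
        · subst heq
          rw [if_neg (lt_irrefl d), if_pos rfl]
          have hle : μ (Icc (-(d:ℝ)) (t + d - d)) ≤ μ (Icc 0 t) := by
            have hsub : Icc (-(d:ℝ)) (t + d - d) ⊆ Icc 0 t ∪ Iio 0 := by
              intro y hy
              obtain ⟨hy0, hy1⟩ := hy
              by_cases h : (0:ℝ) ≤ y
              · exact Or.inl ⟨h, by linarith⟩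
              · exact Or.inr (by simpa using not_le.mp h)
            calc μ (Icc (-(d:ℝ)) (t + d - d)) ≤ μ (Icc 0 t ∪ Iio 0) := measure_mono hsub
              _ ≤ μ (Icc 0 t) + μ (Iio 0) := measure_union_le _ _
              _ = μ (Icc 0 t) := by rw [hIio, add_zero]
          have hge : μ (Icc 0 t) ≤ μ (Icc (-(d:ℝ)) (t + d - d)) := by
            refine measure_mono fun y hy => ?_
            obtain ⟨hy0, hy1⟩ := hy
            constructor <;> [linarith [Nat.cast_nonneg (α := ℝ) d]; linarith]
          simpa using le_antisymm hle hge
        · have hd1 : (d0:ℝ) + 1 ≤ d := by exact_mod_cast hgt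
          rw [if_neg (by omega), if_neg (by omega)]
          have hsub : Icc (-(d:ℝ)) (t + d0 - d) ⊆ Iio 0 ∪ {(0:ℝ)} := by
            intro y hy
            obtain ⟨hy0, hy1⟩ := hy
            rcases lt_trichotomy y 0 with h | h | h
            · exact Or.inl h
            · exact Or.inr h
            · exact absurd (by linarith : y ≤ 0) (not_le.mpr h)
          simp only [add_zero]
          refine le_antisymm ?_ zero_le
          calc μ (Icc (-(d:ℝ)) (t + d0 - d)) ≤ μ (Iio 0 ∪ {(0:ℝ)}) := measure_mono hsub
            _ ≤ μ (Iio 0) + μ {(0:ℝ)} := measure_union_le _ _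
            _ = 0 := by rw [hIio, h0, add_zero]
      rw [Finset.sum_congr rfl hval, Finset.sum_add_distrib]
      congr 1
      · rw [Finset.sum_boole]
      · rw [Finset.sum_ite_eq' D d0 (fun _ => μ (Icc 0 t))]
    rw [main]
    have hmuf : μ (Icc 0 t) ≠ ⊤ := measure_ne_top μ _
    by_cases hmem : d0 ∈ D
    · simp only [hmem, if_true, one_mul]
      rw [ENNReal.toReal_mul, ENNReal.toReal_inv, ENNReal.toReal_add (by finiteness) hmuf]
      simp [inv_mul_eq_div]
    · simp only [hmem, if_false, zero_mul, add_zero]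
      rw [ENNReal.toReal_mul, ENNReal.toReal_inv]
      simp [inv_mul_eq_div]
  -- summability of digit series and tail values
  have hgeo : Summable (fun j : ℕ => ((N:ℝ) - 1) * (1/N)^(j+1)) := by
    apply Summable.mul_left
    exact (summable_geometric_of_lt_one (by positivity)
      (by rw [div_lt_one hN0]; exact hN1)).comp_injective (add_left_injective 1)
  have hsum : ∀ n, Summable (fun j => (a (n+j) : ℝ)/(N:ℝ)^(j+1)) := by
    intro n
    apply Summable.of_nonneg_of_le (fun j => by positivity) (fun j => ?_) hgeo
    rw [div_pow, one_pow, mul_div_assoc']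
    apply div_le_div_of_nonneg_right ?_ (by positivity : (0:ℝ) < (N:ℝ)^(j+1)).le |>.trans_eq rfl
    have : (a (n+j) : ℝ) + 1 ≤ N := by exact_mod_cast ha (n+j)
    linarith
  have hgeosum : ∑' j : ℕ, ((N:ℝ) - 1) * (1/N)^(j+1) = 1 := by
    rw [tsum_mul_left]
    rw [show (fun j : ℕ => (1/(N:ℝ))^(j+1)) = fun j : ℕ => (1/(N:ℝ)) * (1/(N:ℝ))^j from by
      funext j; ring]
    rw [tsum_mul_left, tsum_geometric_of_lt_one (by positivity)
      (by rw [div_lt_one hN0]; exact hN1)]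
    have h1 : (N:ℝ) - 1 ≠ 0 := sub_ne_zero.mpr hN1.ne'
    field_simp
  have hT01 : ∀ n, (∑' j, (a (n+j):ℝ)/(N:ℝ)^(j+1)) ∈ Icc (0:ℝ) 1 := by
    intro n
    constructor
    · exact tsum_nonneg fun j => by positivity
    · rw [← hgeosum]
      apply Summable.tsum_le_tsum (fun j => ?_) (hsum n) hgeo
      rw [div_pow, one_pow, mul_div_assoc']
      apply div_le_div_of_nonneg_right ?_ (by positivity : (0:ℝ) < (N:ℝ)^(j+1)).le |>.trans_eq rfl
      have : (a (n+j) : ℝ) + 1 ≤ N := by exact_mod_cast ha (n+j)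
      linarith
  have hTrec : ∀ n, (∑' j, (a (n+j):ℝ)/(N:ℝ)^(j+1))
      = ((a n : ℝ) + ∑' j, (a (n+1+j):ℝ)/(N:ℝ)^(j+1))/N := by
    intro n
    rw [Summable.tsum_eq_zero_add (hsum n)]
    have hshift : ∑' j : ℕ, (a (n+(j+1)):ℝ)/(N:ℝ)^(j+1+1)
        = (∑' j : ℕ, (a (n+1+j):ℝ)/(N:ℝ)^(j+1))/N := by
      rw [← tsum_div_const]
      apply tsum_congr
      intro j
      rw [show n+(j+1) = n+1+j by ring, div_div, ← pow_succ]
    rw [hshift, pow_one]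
    field_simp
    rw [add_zero]
  have hxT : x = ∑' j, (a (0+j):ℝ)/(N:ℝ)^(j+1) := by
    rw [hxa]
    exact tsum_congr fun i => by rw [zero_add]
  -- F-recursion on the tails
  have hFrec : ∀ n, (μ (Icc 0 (∑' j, (a (n+j):ℝ)/(N:ℝ)^(j+1)))).toReal
      = (((D.filter (fun d => d < a n)).card : ℝ)
          + (if a n ∈ D then (1:ℝ) else 0)
            * (μ (Icc 0 (∑' j, (a (n+1+j):ℝ)/(N:ℝ)^(j+1)))).toReal) / (D.card : ℝ) := by
    intro n
    conv_lhs => rw [hTrec n]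
    exact hstep (a n) (ha n) _ (hT01 (n+1))
  -- partial sums formula
  have hF01 : ∀ y : ℝ, (μ (Icc 0 y)).toReal ≤ 1 := fun y => by
    have := prob_le_one (μ := μ) (s := Icc 0 y)
    have h := ENNReal.toReal_mono (by finiteness) this
    simpa using h
  have hpartial : ∀ n, (μ (Icc 0 x)).toReal
      = (∑ i ∈ Finset.range n,
          (∏ k ∈ Finset.range i, (if a k ∈ D then (1:ℝ) else 0)) *
            (((D.filter (fun d => d < a i)).card : ℝ) / (D.card : ℝ) ^ (i + 1)))
        + (∏ k ∈ Finset.range n, (if a k ∈ D then (1:ℝ) else 0)) / (D.card : ℝ)^n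
          * (μ (Icc 0 (∑' j, (a (n+j):ℝ)/(N:ℝ)^(j+1)))).toReal := by
    intro n
    induction n with
    | zero =>
      rw [hxa]
      simp
    | succ n ih =>
      rw [ih, Finset.sum_range_succ, Finset.prod_range_succ, hFrec n]
      ring
  -- limit of partial sums
  have hProd01 : ∀ n, 0 ≤ (∏ k ∈ Finset.range n, (if a k ∈ D then (1:ℝ) else 0))
      ∧ (∏ k ∈ Finset.range n, (if a k ∈ D then (1:ℝ) else 0)) ≤ 1 := by
    intro n
    constructor
    · exact Finset.prod_nonneg fun k _ => by split <;> norm_num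
    · exact Finset.prod_le_one (fun k _ => by split <;> norm_num)
        (fun k _ => by split <;> norm_num)
  have htendsto : Filter.Tendsto (fun n => ∑ i ∈ Finset.range n,
      (∏ k ∈ Finset.range i, (if a k ∈ D then (1:ℝ) else 0)) *
        (((D.filter (fun d => d < a i)).card : ℝ) / (D.card : ℝ) ^ (i + 1)))
      Filter.atTop (nhds ((μ (Icc 0 x)).toReal)) := by
    have hR : Filter.Tendsto (fun n =>
        (∏ k ∈ Finset.range n, (if a k ∈ D then (1:ℝ) else 0)) / (D.card : ℝ)^n
          * (μ (Icc 0 (∑' j, (a (n+j):ℝ)/(N:ℝ)^(j+1)))).toReal)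
        Filter.atTop (nhds 0) := by
      apply squeeze_zero (fun n => ?_) (fun n => ?_)
        (tendsto_pow_atTop_nhds_zero_of_lt_one (div_nonneg zero_le_one hcR0.le : (0:ℝ) ≤ 1/D.card)
          (by rw [div_lt_one hcR0]; linarith))
      · have := (hProd01 n).1
        have := ENNReal.toReal_nonneg (a := μ (Icc 0 (∑' j, (a (n+j):ℝ)/(N:ℝ)^(j+1))))
        exact mul_nonneg (div_nonneg (hProd01 n).1 (pow_nonneg hcR0.le n)) ENNReal.toReal_nonneg
      · calc (∏ k ∈ Finset.range n, (if a k ∈ D then (1:ℝ) else 0)) / (D.card : ℝ)^n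
              * (μ (Icc 0 (∑' j, (a (n+j):ℝ)/(N:ℝ)^(j+1)))).toReal
            ≤ 1 / (D.card : ℝ)^n * 1 := by
              apply mul_le_mul ?_ (hF01 _) ENNReal.toReal_nonneg (div_nonneg zero_le_one (pow_nonneg hcR0.le n))
              apply div_le_div_of_nonneg_right (hProd01 n).2 (pow_pos hcR0 n : (0:ℝ) < (D.card:ℝ)^n).le |>.trans_eq rfl
          _ = (1/(D.card:ℝ))^n := by rw [mul_one, one_div, one_div, inv_pow]
    have heq : (fun n => ∑ i ∈ Finset.range n,
        (∏ k ∈ Finset.range i, (if a k ∈ D then (1:ℝ) else 0)) *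
          (((D.filter (fun d => d < a i)).card : ℝ) / (D.card : ℝ) ^ (i + 1)))
        = fun n => (μ (Icc 0 x)).toReal - ((∏ k ∈ Finset.range n, (if a k ∈ D then (1:ℝ) else 0)) / (D.card : ℝ)^n
          * (μ (Icc 0 (∑' j, (a (n+j):ℝ)/(N:ℝ)^(j+1)))).toReal) := by
      funext n
      have := hpartial n
      linarith
    rw [heq]
    simpa using tendsto_const_nhds.sub hR
  -- summability of the series
  have hsummf : Summable (fun i => (∏ k ∈ Finset.range i, (if a k ∈ D then (1:ℝ) else 0)) *
      (((D.filter (fun d => d < a i)).card : ℝ) / (D.card : ℝ) ^ (i + 1))) := by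
    apply Summable.of_nonneg_of_le (fun i => ?_) (fun i => ?_)
      (summable_geometric_of_lt_one (div_nonneg zero_le_one hcR0.le : (0:ℝ) ≤ 1/D.card)
        (by rw [div_lt_one hcR0]; linarith))
    · have := (hProd01 i).1
      exact mul_nonneg this (div_nonneg (Nat.cast_nonneg _) (pow_nonneg hcR0.le _))
    · calc (∏ k ∈ Finset.range i, (if a k ∈ D then (1:ℝ) else 0)) *
            (((D.filter (fun d => d < a i)).card : ℝ) / (D.card : ℝ) ^ (i + 1))
          ≤ 1 * (((D.card : ℝ)) / (D.card : ℝ) ^ (i + 1)) := by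
            apply mul_le_mul (hProd01 i).2 ?_ (div_nonneg (Nat.cast_nonneg _) (pow_nonneg hcR0.le _)) (by norm_num)
            apply div_le_div_of_nonneg_right ?_ (pow_pos hcR0 (i+1) : (0:ℝ) < (D.card:ℝ)^(i+1)).le |>.trans_eq rfl
            exact_mod_cast Finset.card_le_card (Finset.filter_subset _ _)
        _ = (1/(D.card:ℝ))^i := by
            rw [one_mul, pow_succ, one_div, inv_pow]
            rw [mul_comm, ← div_div, div_self hcR0.ne', one_div]
  exact tendsto_nhds_unique htendsto (hsummf.hasSum.tendsto_sum_nat)
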